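/- With p, S, and the exponential detection law as in Koopman's allocation problem, the function α ↦ ∫_S max(ln p(x) - α, 0) dx is continuous, non-increasing, tends to 0 as α → ∞, and is strictly decreasing on the set where it is positive; hence for every budget B > 0 (with B ≤ ∫_S max(ln p, -α₀) achievable) there exists α satisfying ∫_S max(ln p - α, 0) dx = B, provided {x : p(x) > 0} has positive measure. -/

import Mathlib

open MeasureTheory Real Set Filter

/-- Properties of the budget function `G(α) = ∫ max (ln p - α) 0` determining
the Lagrange multiplier in Koopman's optimal coverage: `G` is continuous,
non-increasing, tends to `0` as `α → ∞`, is strictly decreasing where positive,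
and every achievable budget `B > 0` is attained by some `α`, provided the set
where `p > 0` has positive measure. -/
theorem koopman_budget_function {S : Type*} [MeasurableSpace S]
    (μ : Measure S) [IsFiniteMeasure μ]
    (p : S → ℝ) (hp_meas : Measurable p) (hp_nonneg : ∀ x, 0 ≤ p x)
    (hp_prob : ∫ x, p x ∂μ = 1)
    (hp_pos : 0 < μ {x | 0 < p x})
    (G : ℝ → ℝ) (hG : ∀ α, G α = ∫ x, max (Real.log (p x) - α) 0 ∂μ)
    (hG_int : ∀ α : ℝ, Integrable (fun x => max (Real.log (p x) - α) 0) μ) :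
    Continuous G ∧
    Antitone G ∧
    Filter.Tendsto G Filter.atTop (nhds 0) ∧
    StrictAntiOn G {α | 0 < G α} ∧
    ∀ B : ℝ, 0 < B → (∃ α₀ : ℝ, B ≤ G α₀) → ∃ α : ℝ, G α = B := by
  set C : ℝ := (μ Set.univ).toReal with hC
  have hC0 : 0 ≤ C := ENNReal.toReal_nonneg
  -- Lipschitz estimate
  have hlip : ∀ α β : ℝ, |G α - G β| ≤ C * |α - β| := by
    intro α β
    rw [hG α, hG β, ← integral_sub (hG_int α) (hG_int β)]
    calc |∫ x, (max (Real.log (p x) - α) 0 - max (Real.log (p x) - β) 0) ∂μ|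
        ≤ ∫ x, |max (Real.log (p x) - α) 0 - max (Real.log (p x) - β) 0| ∂μ :=
        by simpa [Real.norm_eq_abs] using
          norm_integral_le_integral_norm
            (fun x => max (Real.log (p x) - α) 0 - max (Real.log (p x) - β) 0) (μ := μ)
      _ ≤ ∫ _x, |α - β| ∂μ := by
          apply integral_mono (((hG_int α).sub (hG_int β)).abs) (integrable_const _)
          intro x
          have := abs_max_sub_max_le_abs (Real.log (p x) - α) (Real.log (p x) - β) 0
          calc |max (Real.log (p x) - α) 0 - max (Real.log (p x) - β) 0|
              ≤ |(Real.log (p x) - α) - (Real.log (p x) - β)| := this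
            _ = |β - α| := by ring_nf
            _ = |α - β| := abs_sub_comm _ _
      _ = C * |α - β| := by rw [integral_const, smul_eq_mul]; rfl
  have hcont : Continuous G := by
    have : LipschitzWith C.toNNReal G := by
      apply LipschitzWith.of_dist_le_mul
      intro α β
      rw [Real.dist_eq, Real.dist_eq]
      calc |G α - G β| ≤ C * |α - β| := hlip α β
        _ ≤ C.toNNReal * |α - β| := by
            gcongr; exact (Real.le_coe_toNNReal C)
    exact this.continuous
  have hanti : Antitone G := by
    intro α β hab
    rw [hG α, hG β]
    apply integral_mono (hG_int β) (hG_int α)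
    intro x
    exact max_le_max (by linarith) le_rfl
  have htend : Filter.Tendsto G Filter.atTop (nhds 0) := by
    have h0 : Filter.Tendsto (fun α => ∫ x, max (Real.log (p x) - α) 0 ∂μ)
        Filter.atTop (nhds (∫ _x, (0 : ℝ) ∂μ)) := by
      apply tendsto_integral_filter_of_dominated_convergence
        (fun x => max (Real.log (p x) - 0) 0)
      · filter_upwards with α
        exact (hG_int α).aestronglyMeasurable
      · filter_upwards [eventually_ge_atTop (0 : ℝ)] with α hα
        filter_upwards with x
        rw [Real.norm_eq_abs, abs_of_nonneg (le_max_right _ _)]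
        exact max_le_max (by linarith) le_rfl
      · exact hG_int 0
      · filter_upwards with x
        apply Filter.Tendsto.congr' _ tendsto_const_nhds
        filter_upwards [eventually_ge_atTop (Real.log (p x))] with α hα
        exact (max_eq_right (by linarith)).symm
    rw [integral_zero] at h0
    exact h0.congr (fun α => (hG α).symm)
  have key_pos : ∀ β : ℝ, 0 < G β → 0 < μ {x | β < Real.log (p x)} := by
    intro β hβ
    by_contra h
    push_neg at h
    have hz : μ {x | β < Real.log (p x)} = 0 := le_antisymm h zero_le
    have : G β = 0 := by
      rw [hG β]
      apply (integral_eq_zero_iff_of_nonneg (fun x => le_max_right _ _) (hG_int β)).mpr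
      rw [Filter.EventuallyEq, ae_iff]
      apply measure_mono_null _ hz
      intro x hx
      simp only [Set.mem_setOf_eq, Pi.zero_apply] at hx ⊢
      by_contra hle
      push_neg at hle
      exact hx (max_eq_right (by linarith))
    linarith
  have hstrict : StrictAntiOn G {α | 0 < G α} := by
    intro α hα β hβ hab
    simp only [Set.mem_setOf_eq] at hα hβ
    set T : Set S := {x | β < Real.log (p x)} with hT
    have hTmeas : MeasurableSet T :=
      measurableSet_lt measurable_const (Real.measurable_log.comp hp_meas)
    have hTpos : 0 < μ T := key_pos β hβ
    have hTfin : μ T ≠ ⊤ := measure_ne_top μ T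
    have hind : Integrable (T.indicator fun _ => β - α) μ :=
      (integrable_const (β - α)).indicator hTmeas
    have hmono : ∀ x, max (Real.log (p x) - β) 0 + T.indicator (fun _ => β - α) x
        ≤ max (Real.log (p x) - α) 0 := by
      intro x
      by_cases hx : x ∈ T
      · rw [Set.indicator_of_mem hx]
        have hx' : β < Real.log (p x) := hx
        rw [max_eq_left (by linarith), max_eq_left (by linarith)]
        ring_nf; linarith
      · rw [Set.indicator_of_notMem hx, add_zero]
        exact max_le_max (by linarith) le_rfl
    have h1 : G β + (β - α) * (μ T).toReal ≤ G α := by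
      rw [hG α, hG β]
      have := integral_mono ((hG_int β).add hind) (hG_int α) hmono
      simp only [Pi.add_apply] at this
      rwa [integral_add (hG_int β) hind, integral_indicator_const _ hTmeas,
        smul_eq_mul, mul_comm] at this
    have : 0 < (β - α) * (μ T).toReal :=
      mul_pos (by linarith) (ENNReal.toReal_pos hTpos.ne' hTfin)
    linarith
  refine ⟨hcont, hanti, htend, hstrict, ?_⟩
  intro B hB ⟨α₀, hα₀⟩
  have : ∀ᶠ α in Filter.atTop, G α < B := htend.eventually_lt_const hB
  obtain ⟨α₁, hα₁ge, hα₁⟩ := ((eventually_ge_atTop α₀).and this).exists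
  have := intermediate_value_Icc' hα₁ge hcont.continuousOn
  obtain ⟨α, _, hα⟩ := this ⟨hα₁.le, hα₀⟩
  exact ⟨α, hα⟩
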